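/- arXiv:math/0112092 — 2 statements merged into one kernel-verified Lean document; each statement's English description precedes it below -/
import Mathlib

section
/- For every natural number n, the number of permutations of {1,…,n} that avoid the pattern (3,2,1) equals the number of permutations of {1,…,n} that avoid the pattern (3,1,2). -/
/-!
We prove that 321-avoiding and 312-avoiding permutations are equinumerous.
Strategy: a permutation in either class is uniquely determined by its
running-maximum profile `rmax`.  From a profile one can greedily rebuild:
at each new-maximum position place the maximum; at every other position a
321-avoider must carry the *smallest* unused value, while a 312-avoider must
carry the *largest* unused value below the current maximum.  These greedy
builds (`bval` with flag `big = false` / `true`) always produce avoiding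
permutations with the same profile, yielding an explicit bijection.
-/

/-- the list of the first `k` values of the greedy construction -/
noncomputable def blist (n : ℕ) (M : ℕ → ℕ) (big : Bool) : ℕ → List ℕ
  | 0 => []
  | k+1 =>
      let l := blist n M big k
      l ++ [if M k ∈ l then
              (if big then sSup {v | v ∉ l ∧ v < M k}
               else sInf {v | v < n ∧ v ∉ l})
            else M k]

/-- the value of the greedy construction at position `k` -/
noncomputable def bval (n : ℕ) (M : ℕ → ℕ) (big : Bool) (k : ℕ) : ℕ :=
  (blist n M big (k+1)).getLastD 0

lemma blist_eq_map (n : ℕ) (M : ℕ → ℕ) (big : Bool) (k : ℕ) :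
    blist n M big k = (List.range k).map (bval n M big) := by
  induction k with
  | zero => simp [blist]
  | succ k ih =>
      rw [List.range_succ, List.map_append]
      have : bval n M big k = (blist n M big (k+1)).getLastD 0 := rfl
      rw [show blist n M big (k+1) = blist n M big k ++ [_] from rfl] at this ⊢
      simp [List.getLastD_concat] at this
      simp [← ih, this]

lemma mem_blist_iff {n : ℕ} {M : ℕ → ℕ} {big : Bool} {k v : ℕ} :
    v ∈ blist n M big k ↔ ∃ j < k, bval n M big j = v := by
  simp [blist_eq_map, List.mem_map]

lemma bval_def (n : ℕ) (M : ℕ → ℕ) (big : Bool) (k : ℕ) :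
    bval n M big k =
      if M k ∈ blist n M big k then
        (if big then sSup {v | v ∉ blist n M big k ∧ v < M k}
         else sInf {v | v < n ∧ v ∉ blist n M big k})
      else M k := by
  show (blist n M big (k+1)).getLastD 0 = _
  rw [show blist n M big (k+1) = blist n M big k ++ [_] from rfl]
  simp [List.getLastD_concat]

lemma bval_of_not {n : ℕ} {M : ℕ → ℕ} {big : Bool} {k : ℕ}
    (h : ∀ j < k, bval n M big j ≠ M k) : bval n M big k = M k := by
  rw [bval_def, if_neg]
  rw [mem_blist_iff]
  push_neg
  exact h

lemma bval_big {n : ℕ} {M : ℕ → ℕ} {k : ℕ}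
    (h : ∃ j < k, bval n M true j = M k) :
    bval n M true k = sSup {v | (∀ j < k, bval n M true j ≠ v) ∧ v < M k} := by
  rw [bval_def, if_pos (mem_blist_iff.mpr h), if_pos rfl]
  congr 1
  ext v
  simp [mem_blist_iff]

lemma bval_small {n : ℕ} {M : ℕ → ℕ} {k : ℕ}
    (h : ∃ j < k, bval n M false j = M k) :
    bval n M false k = sInf {v | v < n ∧ ∀ j < k, bval n M false j ≠ v} := by
  rw [bval_def, if_pos (mem_blist_iff.mpr h), if_neg (by simp)]
  congr 1
  ext v
  simp [mem_blist_iff]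

lemma blist_congr {n : ℕ} {M M' : ℕ → ℕ} {big : Bool} (h : ∀ k < n, M k = M' k) :
    ∀ k ≤ n, blist n M big k = blist n M' big k := by
  intro k
  induction k with
  | zero => intro _; rfl
  | succ k ih =>
      intro hk
      have hl := ih (by omega)
      rw [show blist n M big (k+1) = blist n M big k ++ [_] from rfl,
          show blist n M' big (k+1) = blist n M' big k ++ [_] from rfl,
          hl, h k (by omega)]

lemma bval_congr {n : ℕ} {M M' : ℕ → ℕ} {big : Bool} (h : ∀ k < n, M k = M' k) :
    ∀ k < n, bval n M big k = bval n M' big k := by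
  intro k hk
  show (blist n M big (k+1)).getLastD 0 = (blist n M' big (k+1)).getLastD 0
  rw [blist_congr h (k+1) (by omega)]

/-- there is an unused value `≤ m` as long as only `k ≤ m` values were used -/
lemma exists_unused (f : ℕ → ℕ) (k m : ℕ) (h : k ≤ m) :
    ∃ v ≤ m, ∀ j < k, f j ≠ v := by
  have himg : ((Finset.range k).image f).card ≤ k :=
    le_trans (Finset.card_image_le) (by simp)
  have hcard : (Finset.Iic m).card ≤ (Finset.Iic m \ (Finset.range k).image f).card
      + ((Finset.range k).image f).card := Finset.card_le_card_sdiff_add_card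
  rw [Nat.card_Iic] at hcard
  have : 0 < (Finset.Iic m \ (Finset.range k).image f).card := by omega
  obtain ⟨v, hv⟩ := Finset.card_pos.mp this
  simp only [Finset.mem_sdiff, Finset.mem_Iic, Finset.mem_image, Finset.mem_range] at hv
  refine ⟨v, hv.1, fun j hj hne => hv.2 ⟨j, hj, hne⟩⟩

lemma build_inv (n : ℕ) (M : ℕ → ℕ) (big : Bool)
    (hlt : ∀ k < n, M k < n) (hge : ∀ k < n, k ≤ M k)
    (hmono : ∀ i j, i ≤ j → M i ≤ M j) :
    ∀ k, k < n → bval n M big k < n ∧ bval n M big k ≤ M k ∧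
      (∀ i < k, bval n M big i ≠ bval n M big k) ∧ ∃ i ≤ k, bval n M big i = M k := by
  intro k
  induction k using Nat.strong_induction_on with
  | _ k IH =>
    intro hk
    by_cases hmem : ∀ j < k, bval n M big j ≠ M k
    · have he := bval_of_not hmem
      exact ⟨he ▸ hlt k hk, he ▸ le_refl _, fun i hi => he ▸ hmem i hi, k, le_refl k, he⟩
    · push_neg at hmem
      obtain ⟨a, ha, hva⟩ := hmem
      obtain ⟨v, hvm, hvun⟩ := exists_unused (bval n M big) k (M k) (hge k hk)
      have hvlt : v < M k := by
        rcases lt_or_eq_of_le hvm with h | h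
        · exact h
        · exact absurd (h ▸ hva) (hvun a ha)
      cases big with
      | false =>
        have he := bval_small ⟨a, ha, hva⟩
        set S : Set ℕ := {v | v < n ∧ ∀ j < k, bval n M false j ≠ v} with hS
        have hvS : v ∈ S := ⟨lt_of_le_of_lt hvm (hlt k hk), hvun⟩
        have hmem' : sInf S ∈ S := Nat.sInf_mem ⟨v, hvS⟩
        have hle : sInf S ≤ v := Nat.sInf_le hvS
        exact ⟨he ▸ hmem'.1, he ▸ le_trans hle hvm,
          fun i hi hcon => hmem'.2 i hi (he ▸ hcon), a, le_of_lt ha, hva⟩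
      | true =>
        have he := bval_big ⟨a, ha, hva⟩
        set S : Set ℕ := {v | (∀ j < k, bval n M true j ≠ v) ∧ v < M k} with hS
        have hvS : v ∈ S := ⟨hvun, hvlt⟩
        have hbdd : BddAbove S := ⟨M k, fun x hx => le_of_lt hx.2⟩
        have hmem' : sSup S ∈ S := Nat.sSup_mem ⟨v, hvS⟩ hbdd
        exact ⟨he ▸ lt_trans hmem'.2 (hlt k hk), he ▸ le_of_lt hmem'.2,
          fun i hi hcon => hmem'.1 i hi (he ▸ hcon), a, le_of_lt ha, hva⟩

section
variable {n : ℕ} {M : ℕ → ℕ}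
  (hlt : ∀ k < n, M k < n) (hge : ∀ k < n, k ≤ M k)
  (hmono : ∀ i j, i ≤ j → M i ≤ M j)

include hlt hge hmono

lemma build_avoid_small :
    ∀ a b c, a < b → b < c → c < n →
      ¬(bval n M false c < bval n M false b ∧ bval n M false b < bval n M false a) := by
  intro a b c hab hbc hc ⟨h1, h2⟩
  have hb : b < n := lt_trans hbc hc
  have ha : a < n := lt_trans hab hb
  by_cases hmem : ∀ j < b, bval n M false j ≠ M b
  · have he := bval_of_not hmem
    have : bval n M false a ≤ M b :=
      le_trans (build_inv n M false hlt hge hmono a ha).2.1 (hmono a b (le_of_lt hab))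
    omega
  · push_neg at hmem
    have he := bval_small hmem
    have hcS : bval n M false c ∈ {v | v < n ∧ ∀ j < b, bval n M false j ≠ v} := by
      refine ⟨(build_inv n M false hlt hge hmono c hc).1, fun j hj => ?_⟩
      exact (build_inv n M false hlt hge hmono c hc).2.2.1 j (lt_trans hj hbc)
    have : bval n M false b ≤ bval n M false c := he ▸ Nat.sInf_le hcS
    omega

lemma build_avoid_big :
    ∀ a b c, a < b → b < c → c < n →
      ¬(bval n M true b < bval n M true c ∧ bval n M true c < bval n M true a) := by
  intro a b c hab hbc hc ⟨h1, h2⟩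
  have hb : b < n := lt_trans hbc hc
  have ha : a < n := lt_trans hab hb
  have haM : bval n M true a ≤ M b :=
    le_trans (build_inv n M true hlt hge hmono a ha).2.1 (hmono a b (le_of_lt hab))
  by_cases hmem : ∀ j < b, bval n M true j ≠ M b
  · have he := bval_of_not hmem
    omega
  · push_neg at hmem
    have he := bval_big hmem
    have hcS : bval n M true c ∈ {v | (∀ j < b, bval n M true j ≠ v) ∧ v < M b} := by
      refine ⟨fun j hj => (build_inv n M true hlt hge hmono c hc).2.2.1 j (lt_trans hj hbc), ?_⟩
      omega
    have hbdd : BddAbove {v | (∀ j < b, bval n M true j ≠ v) ∧ v < M b} :=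
      ⟨M b, fun x hx => le_of_lt hx.2⟩
    have : bval n M true c ≤ bval n M true b := he ▸ le_csSup hbdd hcS
    omega

end

/-- the values of a permutation of `Fin n`, as a function on `ℕ` -/
def fval (n : ℕ) (ρ : Equiv.Perm (Fin n)) (j : ℕ) : ℕ :=
  if h : j < n then (ρ ⟨j, h⟩ : ℕ) else 0

/-- the running maximum of the values of a permutation -/
def rmax (n : ℕ) (ρ : Equiv.Perm (Fin n)) (k : ℕ) : ℕ :=
  (Finset.range (k+1)).sup (fval n ρ)

section
variable {n : ℕ} {ρ : Equiv.Perm (Fin n)}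

lemma fval_apply {j : ℕ} (hj : j < n) : fval n ρ j = (ρ ⟨j, hj⟩ : ℕ) := dif_pos hj

lemma fval_lt (hj : j < n) : fval n ρ j < n := by
  simp only [fval, dif_pos hj]; exact (ρ ⟨j, hj⟩).2

lemma fval_inj {i j : ℕ} (hi : i < n) (hj : j < n) (h : fval n ρ i = fval n ρ j) : i = j := by
  simp only [fval, dif_pos hi, dif_pos hj] at h
  have := ρ.injective (Fin.val_injective h)
  simpa using congrArg Fin.val this

lemma rmax_mono : ∀ i j, i ≤ j → rmax n ρ i ≤ rmax n ρ j := fun i j hij =>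
  Finset.sup_mono (Finset.range_subset_range.mpr (by omega))

lemma fval_le_rmax {j k : ℕ} (h : j ≤ k) : fval n ρ j ≤ rmax n ρ k :=
  Finset.le_sup (Finset.mem_range.mpr (by omega))

lemma rmax_lt (hk : k < n) : rmax n ρ k < n := by
  have h0 : 0 < n := by omega
  rw [rmax, Finset.sup_lt_iff (show ⊥ < n from h0)]
  intro j hj
  rw [Finset.mem_range] at hj
  by_cases h : j < n
  · exact fval_lt h
  · simpa [fval, dif_neg h] using h0

lemma rmax_attained (k : ℕ) : ∃ j ≤ k, fval n ρ j = rmax n ρ k := by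
  obtain ⟨j, hj, he⟩ := Finset.exists_mem_eq_sup (Finset.range (k+1))
    (by simp) (fval n ρ)
  exact ⟨j, Nat.lt_succ_iff.mp (Finset.mem_range.mp hj), he.symm⟩

lemma rmax_ge (hk : k < n) : k ≤ rmax n ρ k := by
  have hsub : (Finset.range (k+1)).image (fval n ρ) ⊆ Finset.range (rmax n ρ k + 1) := by
    intro v hv
    obtain ⟨j, hj, he⟩ := Finset.mem_image.mp hv
    rw [Finset.mem_range]
    have := fval_le_rmax (ρ := ρ) (k := k) (Nat.lt_succ_iff.mp (Finset.mem_range.mp hj))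
    omega
  have hinj : Set.InjOn (fval n ρ) (Finset.range (k+1)) := by
    intro i hi j hj h
    simp only [Finset.coe_range, Set.mem_Iio] at hi hj
    exact fval_inj (by omega) (by omega) h
  have := Finset.card_le_card hsub
  rw [Finset.card_image_of_injOn hinj] at this
  simpa using this

/-- the preimage position of an unused value lies strictly beyond `k` -/
lemma later_pos {k v : ℕ} (hv : v < n) (hun : ∀ j < k, fval n ρ j ≠ v)
    (hne : fval n ρ k ≠ v) : ∃ c, k < c ∧ c < n ∧ fval n ρ c = v := by
  set c := ((ρ.symm ⟨v, hv⟩ : Fin n) : ℕ) with hc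
  have hcn : c < n := (ρ.symm ⟨v, hv⟩).2
  have hfc : fval n ρ c = v := by
    rw [fval_apply hcn]
    have he : (⟨c, hcn⟩ : Fin n) = ρ.symm ⟨v, hv⟩ := by
      apply Fin.ext; simp [hc]
    rw [he, Equiv.apply_symm_apply]
  have h1 : ¬ c < k := fun h => hun c h hfc
  have h2 : c ≠ k := fun h => hne (h ▸ hfc)
  exact ⟨c, by omega, hcn, hfc⟩

lemma perm_lt_iff {i j : ℕ} (hi : i < n) (hj : j < n) :
    ρ ⟨i, hi⟩ < ρ ⟨j, hj⟩ ↔ fval n ρ i < fval n ρ j := by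
  rw [Fin.lt_def, fval_apply hi, fval_apply hj]

lemma reconstruct_321
    (h : ∀ a b c : Fin n, a < b → b < c → ¬(ρ c < ρ b ∧ ρ b < ρ a)) :
    ∀ k, k < n → bval n (rmax n ρ) false k = fval n ρ k := by
  intro k
  induction k using Nat.strong_induction_on with
  | _ k IH =>
    intro hk
    have hiff : ∀ j < k, bval n (rmax n ρ) false j = fval n ρ j :=
      fun j hj => IH j hj (lt_trans hj hk)
    by_cases hQ : ∀ j < k, fval n ρ j ≠ rmax n ρ k
    · rw [bval_of_not (fun j hj => (hiff j hj) ▸ hQ j hj)]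
      obtain ⟨j, hj, he⟩ := rmax_attained (ρ := ρ) k
      rcases eq_or_lt_of_le hj with h' | h'
      · subst h'; exact he.symm
      · exact absurd he (hQ j h')
    · push_neg at hQ
      obtain ⟨a, ha, hfa⟩ := hQ
      have hbc : ∃ j < k, bval n (rmax n ρ) false j = rmax n ρ k :=
        ⟨a, ha, by rw [hiff a ha]; exact hfa⟩
      rw [bval_small hbc]
      have hset : {v | v < n ∧ ∀ j < k, bval n (rmax n ρ) false j ≠ v}
          = {v | v < n ∧ ∀ j < k, fval n ρ j ≠ v} := by
        ext v
        simp only [Set.mem_setOf_eq]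
        exact ⟨fun ⟨h1, h2⟩ => ⟨h1, fun j hj => (hiff j hj) ▸ h2 j hj⟩,
               fun ⟨h1, h2⟩ => ⟨h1, fun j hj => (hiff j hj).symm ▸ h2 j hj⟩⟩
      rw [hset]
      have hkS : fval n ρ k ∈ {v | v < n ∧ ∀ j < k, fval n ρ j ≠ v} :=
        ⟨fval_lt hk, fun j hj hne => by
          have := fval_inj (lt_trans hj hk) hk hne; omega⟩
      have hfkm : fval n ρ k < rmax n ρ k := by
        have h1 : fval n ρ k ≤ rmax n ρ k := fval_le_rmax (le_refl k)
        rcases lt_or_eq_of_le h1 with h' | h'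
        · exact h'
        · have := fval_inj hk (lt_trans ha hk) (h' ▸ hfa.symm); omega
      have hlb : ∀ v ∈ {v | v < n ∧ ∀ j < k, fval n ρ j ≠ v}, fval n ρ k ≤ v := by
        intro v hvS
        by_contra hlt'
        push_neg at hlt'
        obtain ⟨c, hkc, hcn, hfc⟩ := later_pos hvS.1 hvS.2 (by omega)
        refine h ⟨a, lt_trans ha hk⟩ ⟨k, hk⟩ ⟨c, hcn⟩ ?_ ?_ ⟨?_, ?_⟩
        · exact Fin.mk_lt_mk.mpr ha
        · exact Fin.mk_lt_mk.mpr hkc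
        · rw [perm_lt_iff hcn hk, hfc]; omega
        · rw [perm_lt_iff hk (lt_trans ha hk), hfa]; omega
      exact le_antisymm (Nat.sInf_le hkS) (le_csInf ⟨_, hkS⟩ hlb)

lemma reconstruct_312
    (h : ∀ a b c : Fin n, a < b → b < c → ¬(ρ b < ρ c ∧ ρ c < ρ a)) :
    ∀ k, k < n → bval n (rmax n ρ) true k = fval n ρ k := by
  intro k
  induction k using Nat.strong_induction_on with
  | _ k IH =>
    intro hk
    have hiff : ∀ j < k, bval n (rmax n ρ) true j = fval n ρ j :=
      fun j hj => IH j hj (lt_trans hj hk)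
    by_cases hQ : ∀ j < k, fval n ρ j ≠ rmax n ρ k
    · rw [bval_of_not (fun j hj => (hiff j hj) ▸ hQ j hj)]
      obtain ⟨j, hj, he⟩ := rmax_attained (ρ := ρ) k
      rcases eq_or_lt_of_le hj with h' | h'
      · subst h'; exact he.symm
      · exact absurd he (hQ j h')
    · push_neg at hQ
      obtain ⟨a, ha, hfa⟩ := hQ
      have hbc : ∃ j < k, bval n (rmax n ρ) true j = rmax n ρ k :=
        ⟨a, ha, by rw [hiff a ha]; exact hfa⟩
      rw [bval_big hbc]
      have hset : {v | (∀ j < k, bval n (rmax n ρ) true j ≠ v) ∧ v < rmax n ρ k}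
          = {v | (∀ j < k, fval n ρ j ≠ v) ∧ v < rmax n ρ k} := by
        ext v
        simp only [Set.mem_setOf_eq]
        exact ⟨fun ⟨h2, h1⟩ => ⟨fun j hj => (hiff j hj) ▸ h2 j hj, h1⟩,
               fun ⟨h2, h1⟩ => ⟨fun j hj => (hiff j hj).symm ▸ h2 j hj, h1⟩⟩
      rw [hset]
      have hfkm : fval n ρ k < rmax n ρ k := by
        have h1 : fval n ρ k ≤ rmax n ρ k := fval_le_rmax (le_refl k)
        rcases lt_or_eq_of_le h1 with h' | h'
        · exact h'
        · have := fval_inj hk (lt_trans ha hk) (h' ▸ hfa.symm); omega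
      have hkS : fval n ρ k ∈ {v | (∀ j < k, fval n ρ j ≠ v) ∧ v < rmax n ρ k} :=
        ⟨fun j hj hne => by have := fval_inj (lt_trans hj hk) hk hne; omega, hfkm⟩
      have hub : ∀ v ∈ {v | (∀ j < k, fval n ρ j ≠ v) ∧ v < rmax n ρ k}, v ≤ fval n ρ k := by
        intro v hvS
        by_contra hlt'
        push_neg at hlt'
        have hvn : v < n := lt_trans hvS.2 (rmax_lt hk)
        obtain ⟨c, hkc, hcn, hfc⟩ := later_pos hvn hvS.1 (by omega)
        refine h ⟨a, lt_trans ha hk⟩ ⟨k, hk⟩ ⟨c, hcn⟩ ?_ ?_ ⟨?_, ?_⟩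
        · exact Fin.mk_lt_mk.mpr ha
        · exact Fin.mk_lt_mk.mpr hkc
        · rw [perm_lt_iff hk hcn, hfc]; omega
        · rw [perm_lt_iff hcn (lt_trans ha hk), hfc, hfa]
          exact hvS.2
      have hbdd : BddAbove {v | (∀ j < k, fval n ρ j ≠ v) ∧ v < rmax n ρ k} :=
        ⟨rmax n ρ k, fun x hx => le_of_lt hx.2⟩
      exact le_antisymm (csSup_le ⟨_, hkS⟩ hub) (le_csSup hbdd hkS)

end

/-- two-sided injectivity of the greedy build -/
lemma build_inj {n : ℕ} {M : ℕ → ℕ} {big : Bool}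
    (hlt : ∀ k < n, M k < n) (hge : ∀ k < n, k ≤ M k)
    (hmono : ∀ i j, i ≤ j → M i ≤ M j) :
    ∀ i j, i < n → j < n → bval n M big i = bval n M big j → i = j := by
  intro i j hi hj he
  rcases Nat.lt_trichotomy i j with h | h | h
  · exact absurd he ((build_inv n M big hlt hge hmono j hj).2.2.1 i h)
  · exact h
  · exact absurd he.symm ((build_inv n M big hlt hge hmono i hi).2.2.1 j h)

/-- rebuild a permutation greedily from the running-maximum profile of `ρ` -/
noncomputable def fwd (n : ℕ) (big : Bool) (ρ : Equiv.Perm (Fin n)) : Equiv.Perm (Fin n) :=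
  Equiv.ofBijective
    (fun i : Fin n => ⟨bval n (rmax n ρ) big i,
      (build_inv n (rmax n ρ) big (fun _ => rmax_lt) (fun _ => rmax_ge)
        rmax_mono i i.2).1⟩)
    ((Finite.injective_iff_bijective).mp (fun i j he =>
      Fin.ext (build_inj (fun _ => rmax_lt) (fun _ => rmax_ge) rmax_mono
        i j i.2 j.2 (by simpa using congrArg Fin.val he))))

lemma fval_fwd {n : ℕ} {big : Bool} {ρ : Equiv.Perm (Fin n)} {j : ℕ} (hj : j < n) :
    fval n (fwd n big ρ) j = bval n (rmax n ρ) big j := by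
  rw [fval_apply hj]
  rfl

lemma rmax_fwd {n : ℕ} {big : Bool} {ρ : Equiv.Perm (Fin n)} :
    ∀ k < n, rmax n (fwd n big ρ) k = rmax n ρ k := by
  intro k hk
  have hI := build_inv n (rmax n ρ) big (fun _ => rmax_lt) (fun _ => rmax_ge) rmax_mono
  apply le_antisymm
  · rw [rmax]
    apply Finset.sup_le
    intro j hj
    have hjk : j ≤ k := Nat.lt_succ_iff.mp (Finset.mem_range.mp hj)
    rw [fval_fwd (by omega)]
    exact le_trans (hI j (by omega)).2.1 (rmax_mono j k hjk)
  · obtain ⟨i, hik, hie⟩ := (hI k hk).2.2.2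
    calc rmax n ρ k = fval n (fwd n big ρ) i := by rw [fval_fwd (by omega), hie]
    _ ≤ rmax n (fwd n big ρ) k := fval_le_rmax hik

lemma fwd_avoids_312 {n : ℕ} (ρ : Equiv.Perm (Fin n)) :
    ∀ a b c : Fin n, a < b → b < c →
      ¬(fwd n true ρ b < fwd n true ρ c ∧ fwd n true ρ c < fwd n true ρ a) := by
  intro a b c hab hbc ⟨h1, h2⟩
  rw [Fin.lt_def] at hab hbc h1 h2
  have h1' : bval n (rmax n ρ) true b < bval n (rmax n ρ) true c := by
    rw [← fval_fwd b.2, ← fval_fwd c.2, fval_apply b.2, fval_apply c.2]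
    simpa using h1
  have h2' : bval n (rmax n ρ) true c < bval n (rmax n ρ) true a := by
    rw [← fval_fwd c.2, ← fval_fwd a.2, fval_apply c.2, fval_apply a.2]
    simpa using h2
  exact build_avoid_big (fun _ => rmax_lt) (fun _ => rmax_ge) rmax_mono
    a b c hab hbc c.2 ⟨h1', h2'⟩

lemma fwd_avoids_321 {n : ℕ} (ρ : Equiv.Perm (Fin n)) :
    ∀ a b c : Fin n, a < b → b < c →
      ¬(fwd n false ρ c < fwd n false ρ b ∧ fwd n false ρ b < fwd n false ρ a) := by
  intro a b c hab hbc ⟨h1, h2⟩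
  rw [Fin.lt_def] at hab hbc h1 h2
  have h1' : bval n (rmax n ρ) false c < bval n (rmax n ρ) false b := by
    rw [← fval_fwd c.2, ← fval_fwd b.2, fval_apply c.2, fval_apply b.2]
    simpa using h1
  have h2' : bval n (rmax n ρ) false b < bval n (rmax n ρ) false a := by
    rw [← fval_fwd b.2, ← fval_fwd a.2, fval_apply b.2, fval_apply a.2]
    simpa using h2
  exact build_avoid_small (fun _ => rmax_lt) (fun _ => rmax_ge) rmax_mono
    a b c hab hbc c.2 ⟨h1', h2'⟩

/-- The number of (3,2,1)-avoiding permutations of {1,…,n} equals the number of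
(3,1,2)-avoiding permutations of {1,…,n}. -/
theorem card_avoiding_321_eq_card_avoiding_312 (n : ℕ) :
    (Finset.univ.filter (fun ρ : Equiv.Perm (Fin n) =>
      ∀ a b c : Fin n, a < b → b < c → ¬(ρ c < ρ b ∧ ρ b < ρ a))).card =
    (Finset.univ.filter (fun ρ : Equiv.Perm (Fin n) =>
      ∀ a b c : Fin n, a < b → b < c → ¬(ρ b < ρ c ∧ ρ c < ρ a))).card := by
  classical
  apply Finset.card_nbij' (fwd n true) (fwd n false)
  · intro ρ hρ
    simp only [Finset.mem_coe, Finset.mem_filter, Finset.mem_univ, true_and]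
    exact fwd_avoids_312 ρ
  · intro ρ hρ
    simp only [Finset.mem_coe, Finset.mem_filter, Finset.mem_univ, true_and]
    exact fwd_avoids_321 ρ
  · intro ρ hρ
    simp only [Finset.mem_coe, Finset.mem_filter, Finset.mem_univ, true_and] at hρ
    apply Equiv.ext
    intro i
    apply Fin.ext
    show bval n (rmax n (fwd n true ρ)) false i = ((ρ i : Fin n) : ℕ)
    rw [bval_congr (rmax_fwd (big := true) (ρ := ρ)) i i.2,
      reconstruct_321 hρ i i.2, fval_apply i.2]
  · intro ρ hρ
    simp only [Finset.mem_coe, Finset.mem_filter, Finset.mem_univ, true_and] at hρ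
    apply Equiv.ext
    intro i
    apply Fin.ext
    show bval n (rmax n (fwd n false ρ)) true i = ((ρ i : Fin n) : ℕ)
    rw [bval_congr (rmax_fwd (big := false) (ρ := ρ)) i i.2,
      reconstruct_312 hρ i i.2, fval_apply i.2]
end

section
/- A permutation ρ = (ρ_1,…,ρ_n) of {1,…,n} avoids the pattern (3,2,1) if and only if its 321-height vector (h_1,…,h_n) satisfies h_i ≤ h_{i+1} + 1 for all 1 ≤ i ≤ n−1. (Equivalently: the path ψ_{(3,2,1)}(ρ) is an ordinary Dyck path, i.e., has no down-jumps, if and only if ρ is (3,2,1)-avoiding.) -/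
open scoped Classical

def IsLRMax {n : ℕ} (ρ : Equiv.Perm (Fin n)) (i : Fin n) : Prop :=
  ∀ j, j < i → ρ j < ρ i

def IsLastLRMaxBefore {n : ℕ} (ρ : Equiv.Perm (Fin n)) (m i : Fin n) : Prop :=
  m < i ∧ IsLRMax ρ m ∧ ∀ p, m < p → p < i → ¬ IsLRMax ρ p

noncomputable def height321 {n : ℕ} (ρ : Equiv.Perm (Fin n)) (i : Fin n) : ℕ :=
  if IsLRMax ρ i then
    (Finset.univ.filter (fun k => i < k ∧ ρ k < ρ i)).card
  else
    (Finset.univ.filter (fun k => i < k ∧ ρ i < ρ k ∧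
      ∃ m, IsLastLRMaxBefore ρ m i ∧ ρ k < ρ m)).card

/-- instance-free counter -/
noncomputable def cnt {n : ℕ} (P : Fin n → Prop) : ℕ :=
  Set.ncard {k | P k}

lemma card_eq_cnt {n : ℕ} (P : Fin n → Prop) [DecidablePred P] :
    (Finset.univ.filter P).card = cnt P := by
  unfold cnt
  rw [← Set.ncard_coe_finset]
  congr 1
  ext k
  simp

lemma cnt_congr {n : ℕ} {P Q : Fin n → Prop} (h : ∀ a, P a ↔ Q a) : cnt P = cnt Q := by
  unfold cnt
  congr 1
  ext a
  simpa using h a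

lemma cnt_le {n : ℕ} {P Q : Fin n → Prop} (h : ∀ a, P a → Q a) : cnt P ≤ cnt Q := by
  unfold cnt
  exact Set.ncard_le_ncard (fun a ha => h a ha) (Set.toFinite _)

lemma cnt_sandwich {n : ℕ} {P Q : Fin n → Prop} (h : ∀ a, P a → Q a)
    (hc : cnt Q ≤ cnt P) : ∀ a, Q a → P a := by
  have hseq := Set.eq_of_subset_of_ncard_le (show {k | P k} ⊆ {k | Q k} from fun a ha => h a ha)
    hc (Set.toFinite _)
  intro a ha
  have : a ∈ {k | P k} := hseq ▸ (ha : a ∈ {k | Q k})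
  exact this

lemma cnt_or {n : ℕ} {P Q : Fin n → Prop} (h : ∀ a, ¬(P a ∧ Q a)) :
    cnt (fun a => P a ∨ Q a) = cnt P + cnt Q := by
  unfold cnt
  have he : {k : Fin n | P k ∨ Q k} = {k | P k} ∪ {k | Q k} := by
    ext a
    simp [Set.mem_union]
  rw [he, Set.ncard_union_eq _ (Set.toFinite _) (Set.toFinite _)]
  rw [Set.disjoint_left]
  intro a ha hb
  exact h a ⟨ha, hb⟩

lemma cnt_eq_single {n : ℕ} (a : Fin n) (P : Fin n → Prop) :
    cnt (fun k => k = a ∧ P k) = if P a then 1 else 0 := by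
  unfold cnt
  by_cases hP : P a
  · rw [if_pos hP]
    have he : {k : Fin n | k = a ∧ P k} = {a} := by
      ext k
      simp only [Set.mem_setOf_eq, Set.mem_singleton_iff]
      exact ⟨fun h => h.1, fun h => ⟨h, h ▸ hP⟩⟩
    rw [he, Set.ncard_singleton]
  · rw [if_neg hP]
    have he : {k : Fin n | k = a ∧ P k} = ∅ := by
      ext k
      simp only [Set.mem_setOf_eq, Set.mem_empty_iff_false, iff_false]
      rintro ⟨rfl, hk⟩
      exact hP hk
    rw [he, Set.ncard_empty]

lemma fin_lt_split {n v : ℕ} (hv : v + 1 < n) (k : Fin n) :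
    (⟨v, Nat.lt_of_succ_lt hv⟩ : Fin n) < k ↔ k = ⟨v + 1, hv⟩ ∨ (⟨v + 1, hv⟩ : Fin n) < k := by
  simp only [Fin.lt_def, Fin.ext_iff]
  omega

lemma cnt_split {n v : ℕ} (hv : v + 1 < n) (P : Fin n → Prop) :
    cnt (fun k => (⟨v, Nat.lt_of_succ_lt hv⟩ : Fin n) < k ∧ P k)
      = (if P ⟨v + 1, hv⟩ then 1 else 0)
        + cnt (fun k => (⟨v + 1, hv⟩ : Fin n) < k ∧ P k) := by
  have h1 : cnt (fun k => (⟨v, Nat.lt_of_succ_lt hv⟩ : Fin n) < k ∧ P k)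
      = cnt (fun k => (k = ⟨v + 1, hv⟩ ∧ P k) ∨ ((⟨v + 1, hv⟩ : Fin n) < k ∧ P k)) := by
    apply cnt_congr
    intro k
    rw [fin_lt_split hv k, or_and_right]
  rw [h1, cnt_or, cnt_eq_single]
  rintro k ⟨⟨rfl, _⟩, hlt, _⟩
  exact absurd hlt (lt_irrefl _)

lemma cnt_split_pos {n v : ℕ} (hv : v + 1 < n) (P : Fin n → Prop) (hP : P ⟨v + 1, hv⟩) :
    cnt (fun k => (⟨v, Nat.lt_of_succ_lt hv⟩ : Fin n) < k ∧ P k)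
      = 1 + cnt (fun k => (⟨v + 1, hv⟩ : Fin n) < k ∧ P k) := by
  rw [cnt_split hv P, if_pos hP]

lemma cnt_split_neg {n v : ℕ} (hv : v + 1 < n) (P : Fin n → Prop) (hP : ¬ P ⟨v + 1, hv⟩) :
    cnt (fun k => (⟨v, Nat.lt_of_succ_lt hv⟩ : Fin n) < k ∧ P k)
      = cnt (fun k => (⟨v + 1, hv⟩ : Fin n) < k ∧ P k) := by
  rw [cnt_split hv P, if_neg hP, zero_add]

lemma le_of_lastLRMax {n : ℕ} {ρ : Equiv.Perm (Fin n)} {m i : Fin n}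
    (h : IsLastLRMaxBefore ρ m i) : ∀ j, j < i → ρ j ≤ ρ m := by
  by_contra hc
  push_neg at hc
  obtain ⟨j, hj, hmj⟩ := hc
  obtain ⟨p, hp, hmax⟩ := Finset.exists_max_image
    (Finset.univ.filter fun t => t < i ∧ ρ m < ρ t) ρ
    ⟨j, by simp [hj, hmj]⟩
  simp only [Finset.mem_filter, Finset.mem_univ, true_and] at hp hmax
  have hpLR : IsLRMax ρ p := by
    intro q hq
    rcases lt_or_ge (ρ q) (ρ p) with h' | h'
    · exact h'
    · rcases lt_or_ge (ρ m) (ρ q) with h2 | h2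
      · have h3 := hmax q ⟨lt_trans hq hp.1, h2⟩
        have h4 : q = p := ρ.injective (le_antisymm h3 h')
        exact absurd h4 (ne_of_lt hq)
      · exact absurd (le_trans h' h2) (not_le.2 hp.2)
  have hmp : m < p := by
    rcases lt_trichotomy m p with h' | h' | h'
    · exact h'
    · exact absurd (h' ▸ hp.2) (lt_irrefl _)
    · exact absurd (h.2.1 p h') (not_lt.2 (le_of_lt hp.2))
  exact h.2.2 p hmp hp.1 hpLR

lemma lastLRMax_unique {n : ℕ} {ρ : Equiv.Perm (Fin n)} {m m' i : Fin n}
    (h : IsLastLRMaxBefore ρ m i) (h' : IsLastLRMaxBefore ρ m' i) : m = m' := by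
  rcases lt_trichotomy m m' with hlt | he | hgt
  · exact absurd h'.2.1 (h.2.2 m' hlt h'.1)
  · exact he
  · exact absurd h.2.1 (h'.2.2 m hgt h.1)

lemma lastLRMax_exists {n : ℕ} {ρ : Equiv.Perm (Fin n)} {i : Fin n} (h : ∃ j, j < i) :
    ∃ m, IsLastLRMaxBefore ρ m i := by
  obtain ⟨j, hj⟩ := h
  obtain ⟨p, hp, hmax⟩ := Finset.exists_max_image
    (Finset.univ.filter fun t => t < i) ρ ⟨j, by simp [hj]⟩
  simp only [Finset.mem_filter, Finset.mem_univ, true_and] at hp hmax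
  refine ⟨p, hp, ?_, ?_⟩
  · intro q hq
    have h1 := hmax q (lt_trans hq hp)
    exact lt_of_le_of_ne h1 (fun he => absurd (ρ.injective he) (ne_of_lt hq))
  · intro q hpq hqi hLR
    exact absurd (hLR p hpq) (not_lt.2 (hmax q hqi))

lemma lt_lastLRMax {n : ℕ} {ρ : Equiv.Perm (Fin n)} {m i : Fin n}
    (hi : ¬ IsLRMax ρ i) (h : IsLastLRMaxBefore ρ m i) : ρ i < ρ m := by
  unfold IsLRMax at hi
  push_neg at hi
  obtain ⟨j, hj, hji⟩ := hi
  have h1 : ρ i ≤ ρ m := le_trans hji (le_of_lastLRMax h j hj)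
  exact lt_of_le_of_ne h1 (fun he => absurd (ρ.injective he) (ne_of_gt h.1))

lemma height_lr {n : ℕ} {ρ : Equiv.Perm (Fin n)} {i : Fin n} (hi : IsLRMax ρ i) :
    height321 ρ i = cnt (fun k => i < k ∧ ρ k < ρ i) := by
  rw [height321, if_pos hi]
  exact card_eq_cnt _

lemma height_nlr {n : ℕ} {ρ : Equiv.Perm (Fin n)} {i m : Fin n}
    (hi : ¬ IsLRMax ρ i) (hm : IsLastLRMaxBefore ρ m i) :
    height321 ρ i = cnt (fun k => i < k ∧ ρ i < ρ k ∧ ρ k < ρ m) := by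
  rw [height321, if_neg hi, card_eq_cnt]
  apply cnt_congr
  intro k
  constructor
  · rintro ⟨h1, h2, m', hm', h3⟩
    exact ⟨h1, h2, (lastLRMax_unique hm' hm) ▸ h3⟩
  · rintro ⟨h1, h2, h3⟩
    exact ⟨h1, h2, m, hm, h3⟩

lemma exists_lt_of_not_lrmax {n : ℕ} {ρ : Equiv.Perm (Fin n)} {i : Fin n}
    (hi : ¬ IsLRMax ρ i) : ∃ j, j < i := by
  unfold IsLRMax at hi
  push_neg at hi
  obtain ⟨j, hj, _⟩ := hi
  exact ⟨j, hj⟩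

lemma no_jump_key {n : ℕ} (ρ : Equiv.Perm (Fin n))
    (hnj : ∀ i : ℕ, ∀ hi : i + 1 < n,
      height321 ρ ⟨i, Nat.lt_of_succ_lt hi⟩ ≤ height321 ρ ⟨i + 1, hi⟩ + 1) :
    ∀ v : ℕ, ∀ hv : v < n, ¬ IsLRMax ρ ⟨v, hv⟩ → ∀ k, (⟨v, hv⟩ : Fin n) < k → ρ ⟨v, hv⟩ < ρ k := by
  intro v
  induction v using Nat.strong_induction_on with
  | _ v IH =>
    intro hv hb k hk
    have hv1 : 1 ≤ v := by
      by_contra h0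
      obtain ⟨j, hj⟩ := exists_lt_of_not_lrmax hb
      have hj' : (j : ℕ) < v := hj
      omega
    obtain ⟨i, rfl⟩ : ∃ i, v = i + 1 := ⟨v - 1, by omega⟩
    have hIb : (⟨i, by omega⟩ : Fin n) < ⟨i + 1, hv⟩ := Fin.mk_lt_mk.mpr (Nat.lt_succ_self i)
    have hnji := hnj i hv
    by_contra hcon
    have hkb : ρ k < ρ ⟨i + 1, hv⟩ := by
      rcases lt_or_ge (ρ k) (ρ ⟨i + 1, hv⟩) with h' | h'
      · exact h'
      · exact absurd (lt_of_le_of_ne h'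
          (fun he => (ne_of_lt hk) (ρ.injective he))) hcon
    by_cases hI : IsLRMax ρ (⟨i, by omega⟩ : Fin n)
    · -- case A : position i is a LR max; it is the last LR max before i+1
      have hlast : IsLastLRMaxBefore ρ ⟨i, by omega⟩ ⟨i + 1, hv⟩ := by
        refine ⟨hIb, hI, fun p hp1 hp2 => ?_⟩
        have h1 : (i : ℕ) < p.val := hp1
        have h2 : p.val < i + 1 := hp2
        omega
      have hBA : ρ ⟨i + 1, hv⟩ < ρ ⟨i, by omega⟩ := lt_lastLRMax hb hlast
      have hhI : height321 ρ ⟨i, by omega⟩ = 1 +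
          cnt (fun k => (⟨i + 1, hv⟩ : Fin n) < k ∧ ρ k < ρ ⟨i, by omega⟩) := by
        rw [height_lr hI, cnt_split_pos hv (fun k => ρ k < ρ ⟨i, by omega⟩) hBA]
      have hhb : height321 ρ ⟨i + 1, hv⟩ =
          cnt (fun k => (⟨i + 1, hv⟩ : Fin n) < k ∧
            ρ ⟨i + 1, hv⟩ < ρ k ∧ ρ k < ρ ⟨i, by omega⟩) :=
        height_nlr hb hlast
      have hc : cnt (fun k => (⟨i + 1, hv⟩ : Fin n) < k ∧ ρ k < ρ ⟨i, by omega⟩)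
          ≤ cnt (fun k => (⟨i + 1, hv⟩ : Fin n) < k ∧
            ρ ⟨i + 1, hv⟩ < ρ k ∧ ρ k < ρ ⟨i, by omega⟩) := by
        omega
      have hmem := cnt_sandwich
        (P := fun k => (⟨i + 1, hv⟩ : Fin n) < k ∧ ρ ⟨i + 1, hv⟩ < ρ k ∧ ρ k < ρ ⟨i, by omega⟩)
        (Q := fun k => (⟨i + 1, hv⟩ : Fin n) < k ∧ ρ k < ρ ⟨i, by omega⟩)
        (fun a ha => ⟨ha.1, ha.2.2⟩) hc k ⟨hk, lt_trans hkb hBA⟩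
      exact absurd hmem.2.1 (not_lt.2 (le_of_lt hkb))
    · -- case B : position i is not a LR max
      obtain ⟨m, hm⟩ := lastLRMax_exists (ρ := ρ) (exists_lt_of_not_lrmax hI)
      have hlast : IsLastLRMaxBefore ρ m ⟨i + 1, hv⟩ := by
        refine ⟨lt_trans hm.1 hIb, hm.2.1, fun p hp1 hp2 => ?_⟩
        have h2 : p.val < i + 1 := hp2
        rcases Nat.lt_or_ge p.val i with h3 | h3
        · exact hm.2.2 p hp1 (Fin.lt_def.mpr h3)
        · have hpe : p = (⟨i, by omega⟩ : Fin n) := Fin.ext (show p.val = i by omega)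
          exact hpe ▸ hI
      have hIH := IH i (Nat.lt_succ_self i) (by omega) hI
      have hAB : ρ ⟨i, by omega⟩ < ρ ⟨i + 1, hv⟩ := hIH _ hIb
      have hBm : ρ ⟨i + 1, hv⟩ < ρ m := lt_lastLRMax hb hlast
      have hhI : height321 ρ ⟨i, by omega⟩ = 1 +
          cnt (fun k => (⟨i + 1, hv⟩ : Fin n) < k ∧ ρ ⟨i, by omega⟩ < ρ k ∧ ρ k < ρ m) :=
        (height_nlr hI hm).trans
          (cnt_split_pos hv (fun k => ρ ⟨i, by omega⟩ < ρ k ∧ ρ k < ρ m) ⟨hAB, hBm⟩)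
      have hhb : height321 ρ ⟨i + 1, hv⟩ =
          cnt (fun k => (⟨i + 1, hv⟩ : Fin n) < k ∧ ρ ⟨i + 1, hv⟩ < ρ k ∧ ρ k < ρ m) :=
        height_nlr hb hlast
      have hc : cnt (fun k => (⟨i + 1, hv⟩ : Fin n) < k ∧ ρ ⟨i, by omega⟩ < ρ k ∧ ρ k < ρ m)
          ≤ cnt (fun k => (⟨i + 1, hv⟩ : Fin n) < k ∧ ρ ⟨i + 1, hv⟩ < ρ k ∧ ρ k < ρ m) := by
        omega
      have hmem := cnt_sandwich
        (P := fun k => (⟨i + 1, hv⟩ : Fin n) < k ∧ ρ ⟨i + 1, hv⟩ < ρ k ∧ ρ k < ρ m)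
        (Q := fun k => (⟨i + 1, hv⟩ : Fin n) < k ∧ ρ ⟨i, by omega⟩ < ρ k ∧ ρ k < ρ m)
        (fun a ha => ⟨ha.1, lt_trans hAB ha.2.1, ha.2.2⟩) hc
        k ⟨hk, hIH k (lt_trans hIb hk), lt_trans hkb hBm⟩
      exact absurd hmem.2.1 (not_lt.2 (le_of_lt hkb))

/-- A permutation avoids the pattern (3,2,1) if and only if its 321-height vector satisfies
`h i ≤ h (i+1) + 1` for all consecutive positions (i.e. the path `ψ_(3,2,1)(ρ)` is an
ordinary Dyck path, without down-jumps). -/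
theorem avoids321_iff_height321_no_jump {n : ℕ} (ρ : Equiv.Perm (Fin n)) :
    (∀ a b c : Fin n, a < b → b < c → ¬(ρ c < ρ b ∧ ρ b < ρ a)) ↔
    (∀ i : ℕ, ∀ hi : i + 1 < n,
      height321 ρ ⟨i, by omega⟩ ≤ height321 ρ ⟨i + 1, hi⟩ + 1) := by
  constructor
  · intro avoid i hi
    have hIS : (⟨i, by omega⟩ : Fin n) < ⟨i + 1, hi⟩ := Fin.mk_lt_mk.mpr (Nat.lt_succ_self i)
    by_cases hI : IsLRMax ρ (⟨i, by omega⟩ : Fin n) <;>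
      by_cases hS : IsLRMax ρ (⟨i + 1, hi⟩ : Fin n)
    · -- both LR max
      rw [height_lr hI, height_lr hS]
      have hAB : ρ ⟨i, by omega⟩ < ρ ⟨i + 1, hi⟩ := hS _ hIS
      rw [cnt_split_neg hi (fun k => ρ k < ρ ⟨i, by omega⟩) (not_lt.2 (le_of_lt hAB))]
      have := cnt_le
        (P := fun k => (⟨i + 1, hi⟩ : Fin n) < k ∧ ρ k < ρ ⟨i, by omega⟩)
        (Q := fun k => (⟨i + 1, hi⟩ : Fin n) < k ∧ ρ k < ρ ⟨i + 1, hi⟩)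
        (fun a ha => ⟨ha.1, lt_trans ha.2 hAB⟩)
      omega
    · -- i LR max, i+1 not
      have hlast : IsLastLRMaxBefore ρ ⟨i, by omega⟩ ⟨i + 1, hi⟩ := by
        refine ⟨hIS, hI, fun p hp1 hp2 => ?_⟩
        have h1 : (i : ℕ) < p.val := hp1
        have h2 : p.val < i + 1 := hp2
        omega
      have hBA : ρ ⟨i + 1, hi⟩ < ρ ⟨i, by omega⟩ := lt_lastLRMax hS hlast
      rw [height_lr hI, height_nlr hS hlast,
        cnt_split_pos hi (fun k => ρ k < ρ ⟨i, by omega⟩) hBA]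
      have heq := cnt_congr
        (P := fun k => (⟨i + 1, hi⟩ : Fin n) < k ∧ ρ k < ρ ⟨i, by omega⟩)
        (Q := fun k => (⟨i + 1, hi⟩ : Fin n) < k ∧
          ρ ⟨i + 1, hi⟩ < ρ k ∧ ρ k < ρ ⟨i, by omega⟩)
        (by
          intro x
          constructor
          · rintro ⟨h1, h2⟩
            refine ⟨h1, ?_, h2⟩
            rcases lt_or_ge (ρ ⟨i + 1, hi⟩) (ρ x) with h' | h'
            · exact h'
            · have hne : ρ x ≠ ρ ⟨i + 1, hi⟩ :=
                fun he => (ne_of_lt h1) (ρ.injective he).symm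
              exact absurd ⟨lt_of_le_of_ne h' hne, hBA⟩ (avoid _ _ x hIS h1)
          · rintro ⟨h1, h2, h3⟩
            exact ⟨h1, h3⟩)
      omega
    · -- i not LR max, i+1 LR max
      obtain ⟨m, hm⟩ := lastLRMax_exists (ρ := ρ) (exists_lt_of_not_lrmax hI)
      rw [height_nlr hI hm, height_lr hS]
      have hmS : ρ m < ρ ⟨i + 1, hi⟩ := hS m (lt_trans hm.1 hIS)
      rw [cnt_split_neg hi (fun k => ρ ⟨i, by omega⟩ < ρ k ∧ ρ k < ρ m)
        (fun h => lt_asymm hmS h.2)]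
      have := cnt_le
        (P := fun k => (⟨i + 1, hi⟩ : Fin n) < k ∧ ρ ⟨i, by omega⟩ < ρ k ∧ ρ k < ρ m)
        (Q := fun k => (⟨i + 1, hi⟩ : Fin n) < k ∧ ρ k < ρ ⟨i + 1, hi⟩)
        (fun a ha => ⟨ha.1, lt_trans ha.2.2 hmS⟩)
      omega
    · -- both not LR max
      obtain ⟨m, hm⟩ := lastLRMax_exists (ρ := ρ) (exists_lt_of_not_lrmax hI)
      have hlast : IsLastLRMaxBefore ρ m ⟨i + 1, hi⟩ := by
        refine ⟨lt_trans hm.1 hIS, hm.2.1, fun p hp1 hp2 => ?_⟩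
        have h2 : p.val < i + 1 := hp2
        rcases Nat.lt_or_ge p.val i with h3 | h3
        · exact hm.2.2 p hp1 (Fin.lt_def.mpr h3)
        · have hpe : p = (⟨i, by omega⟩ : Fin n) := Fin.ext (show p.val = i by omega)
          exact hpe ▸ hI
      have hAm : ρ ⟨i, by omega⟩ < ρ m := lt_lastLRMax hI hm
      have hBm : ρ ⟨i + 1, hi⟩ < ρ m := lt_lastLRMax hS hlast
      have hAB : ρ ⟨i, by omega⟩ < ρ ⟨i + 1, hi⟩ := by
        rcases lt_or_ge (ρ ⟨i, by omega⟩) (ρ ⟨i + 1, hi⟩) with h' | h'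
        · exact h'
        · have hne : ρ ⟨i + 1, hi⟩ ≠ ρ ⟨i, by omega⟩ :=
            fun he => (ne_of_lt hIS) ((ρ.injective he).symm)
          exact absurd ⟨lt_of_le_of_ne h' hne, hAm⟩ (avoid m _ _ hm.1 hIS)
      rw [height_nlr hI hm, height_nlr hS hlast,
        cnt_split_pos hi (fun k => ρ ⟨i, by omega⟩ < ρ k ∧ ρ k < ρ m) ⟨hAB, hBm⟩]
      have heq := cnt_congr
        (P := fun k => (⟨i + 1, hi⟩ : Fin n) < k ∧ ρ ⟨i, by omega⟩ < ρ k ∧ ρ k < ρ m)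
        (Q := fun k => (⟨i + 1, hi⟩ : Fin n) < k ∧ ρ ⟨i + 1, hi⟩ < ρ k ∧ ρ k < ρ m)
        (by
          intro x
          constructor
          · rintro ⟨h1, h2, h3⟩
            refine ⟨h1, ?_, h3⟩
            rcases lt_or_ge (ρ ⟨i + 1, hi⟩) (ρ x) with h' | h'
            · exact h'
            · have hne : ρ x ≠ ρ ⟨i + 1, hi⟩ :=
                fun he => (ne_of_lt h1) (ρ.injective he).symm
              exact absurd ⟨lt_of_le_of_ne h' hne, hBm⟩
                (avoid m _ x (lt_trans hm.1 hIS) h1)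
          · rintro ⟨h1, h2, h3⟩
            exact ⟨h1, lt_trans hAB h2, h3⟩)
      omega
  · intro hnj a b c hab hbc
    rintro ⟨h1, h2⟩
    have hb : ¬ IsLRMax ρ b := fun hLR => absurd (hLR a hab) (not_lt.2 (le_of_lt h2))
    have := no_jump_key ρ hnj b.val b.isLt (by rwa [Fin.eta]) c (by rwa [Fin.eta])
    rw [Fin.eta] at this
    exact absurd h1 (not_lt.2 (le_of_lt this))
end
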